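/- arXiv:2002.11807 — 2 statements merged into one kernel-verified Lean document; each statement's English description precedes it below -/
import Mathlib

section
/- Let g, π ∈ ℝ^n with g ≠ 0, and let k_p > k_c > 0. Define α = (k_p - k_c)‖g‖² / (k_p‖g‖² + |⟨g, π⟩|) and b = -k_p g. Then α ∈ [0, 1) and ⟨g, α·π + (1-α)·b⟩ ≤ -k_c ‖g‖². -/
theorem stmt_3 (n : ℕ) (g π : EuclideanSpace ℝ (Fin n)) (hg : g ≠ 0)
    (k_p k_c : ℝ) (hkc : 0 < k_c) (hkp : k_c < k_p)
    (α : ℝ) (hα : α = (k_p - k_c) * ‖g‖ ^ 2 / (k_p * ‖g‖ ^ 2 + |inner ℝ g π|))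
    (b : EuclideanSpace ℝ (Fin n)) (hb : b = -(k_p • g)) :
    α ∈ Set.Ico (0:ℝ) 1 ∧
    (inner ℝ g (α • π + (1 - α) • b) : ℝ) ≤ -k_c * ‖g‖ ^ 2 := by
  have hN : (0:ℝ) < ‖g‖ ^ 2 := by have := norm_pos_iff.mpr hg; positivity
  have hD : (0:ℝ) < k_p * ‖g‖ ^ 2 + |inner ℝ g π| := by
    have : 0 < k_p * ‖g‖ ^ 2 := by nlinarith
    have := abs_nonneg (inner ℝ g π : ℝ)
    linarith
  have hnum : 0 ≤ (k_p - k_c) * ‖g‖ ^ 2 := by nlinarith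
  have hα0 : 0 ≤ α := by rw [hα]; positivity
  have hα1 : α < 1 := by
    rw [hα, div_lt_one hD]
    have := abs_nonneg (inner ℝ g π : ℝ)
    nlinarith
  have hαD : α * (k_p * ‖g‖ ^ 2 + |inner ℝ g π|) = (k_p - k_c) * ‖g‖ ^ 2 := by
    rw [hα, div_mul_eq_mul_div, mul_div_assoc, div_self (ne_of_gt hD), mul_one]
  have hinner : (inner ℝ g (α • π + (1 - α) • b) : ℝ)
      = α * inner ℝ g π - (1 - α) * (k_p * ‖g‖ ^ 2) := by
    rw [hb, inner_add_right, inner_smul_right, inner_smul_right, inner_neg_right,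
      inner_smul_right, real_inner_self_eq_norm_sq]
    ring
  refine ⟨⟨hα0, hα1⟩, ?_⟩
  rw [hinner]
  have hle : (inner ℝ g π : ℝ) ≤ |inner ℝ g π| := le_abs_self _
  nlinarith [mul_le_mul_of_nonneg_left hle hα0]
end

section
/- A function f : X^l → ℝ (X a countable set) invariant under all permutations of its l arguments admits a representation f(x₁,…,x_l) = ρ(∑_{m=1}^l φ(x_m)) for some functions φ : X → ℝ^{l+1} and ρ : ℝ^{l+1} → ℝ. -/
lemma sum_pow_mod (b : ℕ) (hb : 2 ≤ b) (s : Multiset ℕ) :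
    (s.map (b ^ ·)).sum % b = s.count 0 % b := by
  induction s using Multiset.induction with
  | empty => simp
  | cons a s ih =>
    simp only [Multiset.map_cons, Multiset.sum_cons, Multiset.count_cons]
    rcases Nat.eq_zero_or_pos a with rfl | ha
    · simp [Nat.add_mod, ih, Nat.add_comm]
    · have hdvd : b ^ a % b = 0 := Nat.mod_eq_zero_of_dvd (dvd_pow_self b ha.ne')
      rw [Nat.add_mod, hdvd, Nat.zero_add, Nat.mod_mod, ih, if_neg ha.ne, Nat.add_zero]

lemma key_multiset (b : ℕ) : ∀ S : ℕ, ∀ s t : Multiset ℕ,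
    (s.map (b ^ ·)).sum = S → (t.map (b ^ ·)).sum = S →
    Multiset.card s = Multiset.card t → Multiset.card s < b → s = t := by
  intro S
  induction S using Nat.strong_induction_on with
  | _ S IH =>
    intro s t hs ht hcard hlt
    rcases Nat.eq_zero_or_pos (Multiset.card s) with h0 | hpos
    · rw [Multiset.card_eq_zero.mp h0, Multiset.card_eq_zero.mp (by omega : Multiset.card t = 0)]
    have hb : 2 ≤ b := by omega
    set z := s.count 0 with hz_def
    set w := t.count 0 with hw_def
    have hz : z < b := lt_of_le_of_lt (Multiset.count_le_card 0 s) hlt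
    have hw : w < b := lt_of_le_of_lt (Multiset.count_le_card 0 t) (hcard ▸ hlt)
    have hzw : z = w := by
      have h1 := sum_pow_mod b hb s
      have h2 := sum_pow_mod b hb t
      rw [hs, Nat.mod_eq_of_lt hz] at h1
      rw [ht, Nat.mod_eq_of_lt hw] at h2
      omega
    set sp := s.filter (fun n => ¬ n = 0) with hsp_def
    set tp := t.filter (fun n => ¬ n = 0) with htp_def
    have hss : s = Multiset.replicate z 0 + sp := by
      conv_lhs => rw [← Multiset.filter_add_not (fun n => n = 0) s]
      congr 1
      simpa using Multiset.filter_eq' s 0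
    have htt : t = Multiset.replicate w 0 + tp := by
      conv_lhs => rw [← Multiset.filter_add_not (fun n => n = 0) t]
      congr 1
      simpa using Multiset.filter_eq' t 0
    have hpos_s : ∀ n ∈ sp, n ≠ 0 := fun n hn => (Multiset.mem_filter.mp hn).2
    have hpos_t : ∀ n ∈ tp, n ≠ 0 := fun n hn => (Multiset.mem_filter.mp hn).2
    set s' := sp.map (· - 1) with hs'_def
    set t' := tp.map (· - 1) with ht'_def
    have hfac : ∀ (u : Multiset ℕ), (∀ n ∈ u, n ≠ 0) →
        (u.map (b ^ ·)).sum = b * ((u.map (· - 1)).map (b ^ ·)).sum := by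
      intro u hu
      rw [Multiset.map_map, ← Multiset.sum_map_mul_left]
      apply congrArg
      apply Multiset.map_congr rfl
      intro n hn
      have : n - 1 + 1 = n := Nat.succ_pred_eq_of_pos (Nat.pos_of_ne_zero (hu n hn))
      rw [Function.comp_apply, ← pow_succ', this]
    have hsum_s : z + b * (s'.map (b ^ ·)).sum = S := by
      rw [← hs, hss]
      simp [Multiset.sum_replicate, ← hfac sp hpos_s]
      exact (hfac sp hpos_s).symm
    have hsum_t : w + b * (t'.map (b ^ ·)).sum = S := by
      rw [← ht, htt]
      simp [Multiset.sum_replicate, ← hfac tp hpos_t]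
      exact (hfac tp hpos_t).symm
    set A := (s'.map (b ^ ·)).sum with hA_def
    set B := (t'.map (b ^ ·)).sum with hB_def
    have hAB : A = B := by
      have : b * A = b * B := by omega
      exact Nat.eq_of_mul_eq_mul_left (by omega) this
    have hcard_s : z + Multiset.card sp = Multiset.card s := by
      rw [hss]; simp
    have hcard_t : w + Multiset.card tp = Multiset.card t := by
      rw [htt]; simp
    rcases Nat.eq_zero_or_pos A with hA0 | hApos
    · -- all elements are 0
      have hs0 : s' = 0 := by
        by_contra h
        obtain ⟨a, ha⟩ := Multiset.exists_mem_of_ne_zero h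
        have : 0 < (s'.map (b ^ ·)).sum := by
          calc 0 < b ^ a := Nat.pow_pos (by omega)
          _ ≤ (s'.map (b ^ ·)).sum :=
            Multiset.single_le_sum (fun x hx => Nat.zero_le x) _
              (Multiset.mem_map_of_mem _ ha)
        omega
      have ht0 : t' = 0 := by
        by_contra h
        obtain ⟨a, ha⟩ := Multiset.exists_mem_of_ne_zero h
        have : 0 < (t'.map (b ^ ·)).sum := by
          calc 0 < b ^ a := Nat.pow_pos (by omega)
          _ ≤ (t'.map (b ^ ·)).sum :=
            Multiset.single_le_sum (fun x hx => Nat.zero_le x) _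
              (Multiset.mem_map_of_mem _ ha)
        omega
      have : sp = 0 := Multiset.map_eq_zero.mp hs0
      have h2 : tp = 0 := Multiset.map_eq_zero.mp ht0
      rw [hss, htt, this, h2, hzw]
    · -- recursive case
      have hAS : A < S := by
        have : z + b * A = S := hsum_s
        nlinarith
      have hst' : s' = t' := by
        apply IH A hAS s' t' rfl hAB.symm
        · simp only [hs'_def, ht'_def, Multiset.card_map]
          omega
        · simp only [hs'_def, Multiset.card_map]
          omega
      have hrecover : ∀ (u : Multiset ℕ), (∀ n ∈ u, n ≠ 0) →
          (u.map (· - 1)).map (· + 1) = u := by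
        intro u hu
        rw [Multiset.map_map]
        conv_rhs => rw [← Multiset.map_id u]
        apply Multiset.map_congr rfl
        intro n hn
        have := hu n hn
        simp only [Function.comp_apply, id_eq]
        omega
      have : sp = tp := by
        rw [← hrecover sp hpos_s, ← hrecover tp hpos_t, ← hs'_def, ← ht'_def, hst']
      rw [hss, htt, this, hzw]

lemma exists_perm {l : ℕ} (u v : Fin l → ℕ) (h : (List.ofFn u).Perm (List.ofFn v)) :
    ∃ σ : Equiv.Perm (Fin l), ∀ i, u i = v (σ i) := by
  have hu := Tuple.monotone_sort u
  have hv := Tuple.monotone_sort v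
  have h1 : List.ofFn (u ∘ Tuple.sort u) = List.ofFn (v ∘ Tuple.sort v) :=
    List.Perm.eq_of_sortedLE hu.sortedLE_ofFn hv.sortedLE_ofFn
      (((Tuple.sort u).ofFn_comp_perm u).trans (h.trans ((Tuple.sort v).ofFn_comp_perm v).symm))
  have h2 := List.ofFn_injective h1
  refine ⟨(Tuple.sort u).symm.trans (Tuple.sort v), fun i => ?_⟩
  have := congrFun h2 ((Tuple.sort u).symm i)
  simpa using this

theorem stmt_12 {X : Type*} [Countable X] (l : ℕ)
    (f : (Fin l → X) → ℝ)
    (hf : ∀ σ : Equiv.Perm (Fin l), ∀ x : Fin l → X, f (x ∘ σ) = f x) :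
    ∃ (φ : X → (Fin (l + 1) → ℝ)) (ρ : (Fin (l + 1) → ℝ) → ℝ),
      ∀ x : Fin l → X, f x = ρ (∑ m : Fin l, φ (x m)) := by
  classical
  obtain ⟨c, hc⟩ := Countable.exists_injective_nat X
  set φ : X → Fin (l + 1) → ℝ := fun x _ => ((l + 1) ^ c x : ℕ) with hφ
  refine ⟨φ, fun s => if h : ∃ x : Fin l → X, (∑ m : Fin l, φ (x m)) = s
    then f (Classical.choose h) else 0, fun x => ?_⟩
  have hx : ∃ x' : Fin l → X, (∑ m : Fin l, φ (x' m)) = ∑ m : Fin l, φ (x m) := ⟨x, rfl⟩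
  beta_reduce
  rw [dif_pos hx]
  set y := Classical.choose hx with hy_def
  have hy : (∑ m : Fin l, φ (y m)) = ∑ m : Fin l, φ (x m) := Classical.choose_spec hx
  have h0 := congrFun hy 0
  rw [Finset.sum_apply, Finset.sum_apply] at h0
  simp only [hφ] at h0
  have hnat : ∑ m : Fin l, (l + 1) ^ c (y m) = ∑ m : Fin l, (l + 1) ^ c (x m) := by
    exact_mod_cast h0
  have hms : (List.ofFn (fun m => c (y m)) : Multiset ℕ)
      = (List.ofFn (fun m => c (x m)) : Multiset ℕ) := by
    apply key_multiset (l + 1) (∑ m : Fin l, (l + 1) ^ c (x m))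
    · simpa [Multiset.map_coe, List.map_ofFn, List.sum_ofFn, Function.comp] using hnat
    · simp [Multiset.map_coe, List.map_ofFn, List.sum_ofFn, Function.comp]
    · simp
    · simp
  obtain ⟨σ, hσ⟩ := exists_perm _ _ (Multiset.coe_eq_coe.mp hms)
  have hyx : y = x ∘ σ := funext fun i => hc (hσ i)
  rw [hyx, hf σ x]
end
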